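/- Let V₁ and V₂ be finite sets, let φ¹ : Fin (d+1) → Equiv.Perm V₁ and φ² : Fin (d+1) → Equiv.Perm V₂ be families of fixed-point-free involutions, and let v₁ ∈ V₁, v₂ ∈ V₂. On the vertex set W = {u : V₁ // u ≠ v₁} ⊕ {u : V₂ // u ≠ v₂}, define for each color i the map ψ i : W → W by: ψ i (Sum.inl u) = Sum.inr ⟨(φ² i) v₂⟩ if (φ¹ i) u = v₁, and Sum.inl ⟨(φ¹ i) u⟩ otherwise; and symmetrically ψ i (Sum.inr u) = Sum.inl ⟨(φ¹ i) v₁⟩ if (φ² i) u = v₂, and Sum.inr ⟨(φ² i) u⟩ otherwise. Then for every color i the map ψ i is a well-defined fixed-point-free involution of W. -/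

import Mathlib

/-- The connected-sum map of two fixed-point-free permutations `a : Equiv.Perm V₁` and
`b : Equiv.Perm V₂` along vertices `v₁ : V₁` and `v₂ : V₂`: delete `v₁` and `v₂` and join
the former `a`-neighbor of `v₁` to the former `b`-neighbor of `v₂`. -/
def connSumMap {V₁ V₂ : Type*} [DecidableEq V₁] [DecidableEq V₂]
    (a : Equiv.Perm V₁) (b : Equiv.Perm V₂) (v₁ : V₁) (v₂ : V₂)
    (ha : ∀ v, a v ≠ v) (hb : ∀ v, b v ≠ v) :
    ({u : V₁ // u ≠ v₁} ⊕ {u : V₂ // u ≠ v₂}) → ({u : V₁ // u ≠ v₁} ⊕ {u : V₂ // u ≠ v₂})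
  | Sum.inl u => if h : a u.val = v₁ then Sum.inr ⟨b v₂, hb v₂⟩ else Sum.inl ⟨a u.val, h⟩
  | Sum.inr u => if h : b u.val = v₂ then Sum.inl ⟨a v₁, ha v₁⟩ else Sum.inr ⟨b u.val, h⟩

/-- For families `φ₁ : Fin (d+1) → Equiv.Perm V₁` and
`φ₂ : Fin (d+1) → Equiv.Perm V₂` of fixed-point-free involutions and vertices `v₁ : V₁`,
`v₂ : V₂`, the connected-sum map `ψ i` of each color `i` is a well-defined
fixed-point-free involution of the vertex set `{u // u ≠ v₁} ⊕ {u // u ≠ v₂}`. -/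
theorem connSum_involutive_fixedPointFree
    {d : ℕ} {V₁ V₂ : Type*} [Fintype V₁] [Fintype V₂] [DecidableEq V₁] [DecidableEq V₂]
    (φ₁ : Fin (d + 1) → Equiv.Perm V₁) (φ₂ : Fin (d + 1) → Equiv.Perm V₂)
    (h₁inv : ∀ i, Function.Involutive (φ₁ i)) (h₂inv : ∀ i, Function.Involutive (φ₂ i))
    (h₁fpf : ∀ i v, (φ₁ i) v ≠ v) (h₂fpf : ∀ i v, (φ₂ i) v ≠ v)
    (v₁ : V₁) (v₂ : V₂) (i : Fin (d + 1)) :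
    Function.Involutive (connSumMap (φ₁ i) (φ₂ i) v₁ v₂ (h₁fpf i) (h₂fpf i)) ∧
    ∀ w, connSumMap (φ₁ i) (φ₂ i) v₁ v₂ (h₁fpf i) (h₂fpf i) w ≠ w := by
  set a := φ₁ i
  set b := φ₂ i
  have ha := h₁inv i
  have hb := h₂inv i
  constructor
  · rintro (⟨u, hu⟩ | ⟨u, hu⟩)
    · by_cases h : a u = v₁
      · have : a v₁ = u := by rw [← h, ha u]
        simp +zetaDelta [connSumMap, h, hb v₂, this]
      · have h2 : a (a u) ≠ v₁ := by rw [ha u]; exact hu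
        simp +zetaDelta [connSumMap, h, h2, ha u, hu]
    · by_cases h : b u = v₂
      · have : b v₂ = u := by rw [← h, hb u]
        simp +zetaDelta [connSumMap, h, ha v₁, this]
      · have h2 : b (b u) ≠ v₂ := by rw [hb u]; exact hu
        simp +zetaDelta [connSumMap, h, h2, hb u, hu]
  · rintro (⟨u, hu⟩ | ⟨u, hu⟩)
    · by_cases h : a u = v₁ <;> simp +zetaDelta [connSumMap, h, h₁fpf i u]
    · by_cases h : b u = v₂ <;> simp +zetaDelta [connSumMap, h, h₂fpf i u]
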